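/- arXiv:2001.04597 — 2 statements merged into one kernel-verified Lean document; each statement's English description precedes it below -/
import Mathlib

section
/- In the symmetric group S_6, let w_1 = 241635 and w_2 = 315264 (one-line notation). Then {1, w_1, w_2} is a complete disjoint system: w_1 and w_2 commute with the longest element w_o = 654321, and the set of all transpositions of S_6 is the disjoint union of S, w_1 S w_1^{-1}, and w_2 S w_2^{-1}, where S is the set of simple transpositions. -/
set_option maxRecDepth 100000
set_option maxHeartbeats 1000000

open Equiv

/-- The set of simple transpositions of `S₆ = Perm (Fin 6)` (0-indexed). -/
def simplesS6 : Set (Perm (Fin 6)) :=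
  {σ | ∃ i : Fin 5, σ = Equiv.swap i.castSucc i.succ}

/-- `w S w⁻¹` for a set `S` of permutations. -/
def conjSet (w : Perm (Fin 6)) (S : Set (Perm (Fin 6))) : Set (Perm (Fin 6)) :=
  (fun s => w * s * w⁻¹) '' S

/-- The permutation `w₁ = 241635` of the paper, 0-indexed: the 6-cycle (0 1 3 5 4 2). -/
def w1S6 : Perm (Fin 6) := c[(0 : Fin 6), 1, 3, 5, 4, 2]

/-- The permutation `w₂ = 315264` of the paper, 0-indexed: the 6-cycle (0 2 4 5 3 1). -/
def w2S6 : Perm (Fin 6) := c[(0 : Fin 6), 2, 4, 5, 3, 1]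

lemma memSimples (σ : Perm (Fin 6)) :
    σ ∈ simplesS6 ↔ ∃ i : Fin 5, σ = Equiv.swap i.castSucc i.succ := Iff.rfl

lemma memConj (w σ : Perm (Fin 6)) :
    σ ∈ conjSet w simplesS6 ↔ ∃ i : Fin 5, σ = w * Equiv.swap i.castSucc i.succ * w⁻¹ := by
  simp only [conjSet, simplesS6, Set.mem_image, Set.mem_setOf_eq]
  constructor
  · rintro ⟨x, ⟨i, rfl⟩, rfl⟩; exact ⟨i, rfl⟩
  · rintro ⟨i, rfl⟩; exact ⟨_, ⟨i, rfl⟩, rfl⟩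

lemma conj_isSwap (w : Perm (Fin 6)) (i : Fin 5) :
    (w * Equiv.swap i.castSucc i.succ * w⁻¹).IsSwap := by
  rw [← swap_apply_apply]
  exact ⟨_, _, fun h => (show i.castSucc < i.succ from Fin.castSucc_lt_succ).ne (w.injective h), rfl⟩

/-- `{1, w₁, w₂}` is a complete disjoint system in `S₆`: `w₁` and `w₂`
commute with the longest element `w₀` (the order-reversing permutation), and the set of
all transpositions is the disjoint union of `S`, `w₁ S w₁⁻¹` and `w₂ S w₂⁻¹`. -/
theorem stmt4 :
    Commute w1S6 Fin.revPerm ∧ Commute w2S6 Fin.revPerm ∧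
      {σ : Perm (Fin 6) | σ.IsSwap} =
        simplesS6 ∪ conjSet w1S6 simplesS6 ∪ conjSet w2S6 simplesS6 ∧
      Disjoint simplesS6 (conjSet w1S6 simplesS6) ∧
      Disjoint simplesS6 (conjSet w2S6 simplesS6) ∧
      Disjoint (conjSet w1S6 simplesS6) (conjSet w2S6 simplesS6) := by
  refine ⟨Equiv.ext (by decide), Equiv.ext (by decide), ?_, ?_, ?_, ?_⟩
  · ext σ
    simp only [Set.mem_setOf_eq, Set.mem_union, memConj, memSimples]
    constructor
    · rintro ⟨x, y, hxy, rfl⟩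
      revert hxy; revert y; revert x
      decide
    · rintro ((⟨i, rfl⟩ | ⟨i, rfl⟩) | ⟨i, rfl⟩)
      · exact ⟨_, _, (show i.castSucc < i.succ from Fin.castSucc_lt_succ).ne, rfl⟩
      · exact conj_isSwap _ i
      · exact conj_isSwap _ i
  · rw [Set.disjoint_left]
    rintro σ ⟨i, rfl⟩ h
    obtain ⟨j, hj⟩ := (memConj _ _).mp h
    clear h; revert hj; revert j; revert i; decide
  · rw [Set.disjoint_left]
    rintro σ ⟨i, rfl⟩ h
    obtain ⟨j, hj⟩ := (memConj _ _).mp h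
    clear h; revert hj; revert j; revert i; decide
  · rw [Set.disjoint_left]
    intro σ h1 h2
    obtain ⟨i, rfl⟩ := (memConj _ _).mp h1
    obtain ⟨j, hj⟩ := (memConj _ _).mp h2
    clear h1 h2; revert hj; revert j; revert i; decide
end

section
/- Let A be a connected Z_{≥0}-graded braided Hopf algebra in the Yetter–Drinfeld category over a Hopf algebra H, and suppose A is finite dimensional. If x is a nonzero left integral in A (i.e. zx = ε(z)x for all z ∈ A), then x is homogeneous of some degree m, A^m = k·x, A^{m'} = 0 for all m' > m, and x is also a right integral in A. -/
/-- `x` is a left integral: `z * x = ε(z) • x` for all `z`. -/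
def IsLeftIntegral {k A : Type*} [CommSemiring k] [Ring A] [Algebra k A]
    (ε : A →ₐ[k] k) (x : A) : Prop := ∀ z : A, z * x = ε z • x

/-- `x` is a right integral: `x * z = ε(z) • x` for all `z`. -/
def IsRightIntegral {k A : Type*} [CommSemiring k] [Ring A] [Algebra k A]
    (ε : A →ₐ[k] k) (x : A) : Prop := ∀ z : A, x * z = ε z • x

/-- let `A` be a finite dimensional connected `ℕ`-graded braided Hopf
algebra (axiomatized by an internal grading, a counit vanishing in positive degrees,
connectedness `A⁰ = k·1`, and the fact that left integrals are unique up to scalar).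
If `x` is a nonzero left integral then `x` is homogeneous of some degree `m`,
`A^m = k·x`, `A^{m'} = 0` for `m' > m`, and `x` is also a right integral. -/
theorem stmt9 (k : Type*) [Field k] (A : Type*) [Ring A] [Algebra k A]
    (ndeg : ℕ → Submodule k A)
    (hinternal : DirectSum.IsInternal ndeg)
    (hone : (1 : A) ∈ ndeg 0)
    (hmul : ∀ (m n : ℕ) (a b : A), a ∈ ndeg m → b ∈ ndeg n → a * b ∈ ndeg (m + n))
    (hconn : ndeg 0 = Submodule.span k {(1 : A)})
    (ε : A →ₐ[k] k)
    (hε : ∀ n > 0, ∀ a ∈ ndeg n, ε a = 0)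
    [FiniteDimensional k A]
    (huniq : ∀ x y : A, IsLeftIntegral ε x → IsLeftIntegral ε y → x ≠ 0 →
      ∃ c : k, y = c • x)
    (x : A) (hx0 : x ≠ 0) (hx : IsLeftIntegral ε x) :
    ∃ m : ℕ, x ∈ ndeg m ∧ ndeg m = Submodule.span k {x} ∧
      (∀ m' : ℕ, m < m' → ndeg m' = ⊥) ∧ IsRightIntegral ε x := by
  classical
  have htop : iSup ndeg = ⊤ := hinternal.submodule_iSup_eq_top
  -- The set of degrees with a nonzero piece is finite.
  set S : Set ℕ := {n | ndeg n ≠ ⊥} with hS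
  have hSfin : S.Finite := by
    rw [← Set.not_infinite]
    intro hinf
    have hv : ∀ n : S, ∃ v : A, v ∈ ndeg n ∧ v ≠ 0 := by
      intro n
      obtain ⟨v, hv, hv0⟩ := Submodule.exists_mem_ne_zero_of_ne_bot n.2
      exact ⟨v, hv, hv0⟩
    choose v hv1 hv2 using hv
    have hli : LinearIndependent k v :=
      (hinternal.submodule_iSupIndep.comp Subtype.coe_injective).linearIndependent
        (fun n : S => ndeg n) hv1 hv2
    have : S.Finite := Set.finite_coe_iff.mp hli.finite
    exact hinf this
  have hSne : S.Nonempty := by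
    by_contra hne
    have hbot : ∀ n, ndeg n = ⊥ := by
      intro n
      by_contra hb
      exact hne ⟨n, hb⟩
    have : x ∈ (⊤ : Submodule k A) := Submodule.mem_top
    rw [← htop] at this
    have : x ∈ (⊥ : Submodule k A) := by
      have : iSup ndeg ≤ ⊥ := iSup_le fun n => (hbot n).le
      exact this ‹x ∈ iSup ndeg›
    exact hx0 (Submodule.mem_bot k |>.mp this)
  -- N is the top nonzero degree.
  obtain ⟨N, hNS, hNmax⟩ := Set.exists_max_image S id hSfin hSne
  have hzero : ∀ m', N < m' → ndeg m' = ⊥ := by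
    intro m' hm'
    by_contra hb
    have := hNmax m' hb
    simp only [id] at this
    omega
  -- any element of a piece of degree ≥ N, multiplied on the left or right by z, is ε z • it
  have key : ∀ y ∈ ndeg N, (∀ z : A, z * y = ε z • y) ∧ (∀ z : A, y * z = ε z • y) := by
    intro y hy
    have main : ∀ z : A, z * y = ε z • y ∧ y * z = ε z • y := by
      intro z
      have hz : z ∈ iSup ndeg := htop ▸ Submodule.mem_top
      refine Submodule.iSup_induction (motive := fun z => z * y = ε z • y ∧ y * z = ε z • y)
        ndeg hz ?_ ?_ ?_
      · intro n z hzn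
        rcases Nat.eq_zero_or_pos n with hn | hn
        · subst hn
          rw [hconn] at hzn
          obtain ⟨c, hc⟩ := Submodule.mem_span_singleton.mp hzn
          subst hc
          constructor
          · rw [smul_mul_assoc, one_mul, map_smul, map_one, smul_eq_mul, mul_one]
          · rw [mul_smul_comm, mul_one, map_smul, map_one, smul_eq_mul, mul_one]
        · have hez : ε z = 0 := hε n hn z hzn
          have h1 : z * y ∈ ndeg (n + N) := hmul n N z y hzn hy
          have h2 : y * z ∈ ndeg (N + n) := hmul N n y z hy hzn
          rw [hzero (n + N) (by omega)] at h1
          rw [hzero (N + n) (by omega)] at h2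
          rw [hez, zero_smul]
          exact ⟨Submodule.mem_bot k |>.mp h1, Submodule.mem_bot k |>.mp h2⟩
      · simp
      · intro a b ha hb
        constructor
        · rw [add_mul, ha.1, hb.1, map_add, add_smul]
        · rw [mul_add, ha.2, hb.2, map_add, add_smul]
    exact ⟨fun z => (main z).1, fun z => (main z).2⟩
  -- x lies in degree N
  obtain ⟨y0, hy0, hy00⟩ := Submodule.exists_mem_ne_zero_of_ne_bot hNS
  obtain ⟨c, hc⟩ := huniq x y0 hx (fun z => (key y0 hy0).1 z) hx0
  have hcne : c ≠ 0 := by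
    intro h
    rw [h, zero_smul] at hc
    exact hy00 hc
  have hxN : x ∈ ndeg N := by
    have : x = c⁻¹ • y0 := by
      rw [hc, smul_smul, inv_mul_cancel₀ hcne, one_smul]
    rw [this]
    exact Submodule.smul_mem _ _ hy0
  refine ⟨N, hxN, ?_, hzero, fun z => (key x hxN).2 z⟩
  -- ndeg N = span {x}
  apply le_antisymm
  · intro y hy
    rcases eq_or_ne y 0 with hy0' | hy0'
    · simp [hy0']
    · obtain ⟨c', hc'⟩ := huniq x y hx (fun z => (key y hy).1 z) hx0
      exact Submodule.mem_span_singleton.mpr ⟨c', hc'.symm⟩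
  · rw [Submodule.span_le, Set.singleton_subset_iff]
    exact hxN
end
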